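/- arXiv:math/0207204 — 2 statements merged into one kernel-verified Lean document; each statement's English description precedes it below -/
import Mathlib

section
/- For every natural number n ≥ 0, b_n({12, 2̄1}) = n! + n!·Σ_{i=1}^{n} ( (1/i)·Σ_{j=0}^{i-1} 1/j! ). -/
/-- A signed permutation of length `n`: a permutation of `Fin n` (the absolute
values) together with a sign (bar) for each position. -/
abbrev SignedPerm (n : ℕ) := Equiv.Perm (Fin n) × (Fin n → Bool)

/-- `α` contains the signed pattern `τ`. -/
def SPContains {n k : ℕ} (α : SignedPerm n) (τ : SignedPerm k) : Prop :=
  ∃ f : Fin k → Fin n, StrictMono f ∧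
    (∀ p q : Fin k, τ.1 p < τ.1 q ↔ α.1 (f p) < α.1 (f q)) ∧
    ∀ j : Fin k, α.2 (f j) = τ.2 j

/-- `α` avoids every pattern in `T`. -/
def AvoidsAll {n k : ℕ} (T : Set (SignedPerm k)) (α : SignedPerm n) : Prop :=
  ∀ τ ∈ T, ¬ SPContains α τ

/-- `bn n T` is the number of signed permutations in `B_n` avoiding all patterns of `T`. -/
noncomputable def bn (n : ℕ) (T : Set (SignedPerm 2)) : ℕ :=
  Nat.card {α : SignedPerm n // AvoidsAll T α}

def p12   : SignedPerm 2 := (Equiv.refl (Fin 2), ![false, false])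
def p21   : SignedPerm 2 := (Equiv.swap 0 1,     ![false, false])
def p12b  : SignedPerm 2 := (Equiv.refl (Fin 2), ![false, true])
def p1b2  : SignedPerm 2 := (Equiv.refl (Fin 2), ![true, false])
def p21b  : SignedPerm 2 := (Equiv.swap 0 1,     ![false, true])
def p2b1  : SignedPerm 2 := (Equiv.swap 0 1,     ![true, false])
def p1b2b : SignedPerm 2 := (Equiv.refl (Fin 2), ![true, true])
def p2b1b : SignedPerm 2 := (Equiv.swap 0 1,     ![true, true])


section AuxProof

open Equiv Fin

def Good {n : ℕ} (α : SignedPerm n) : Prop :=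
  ∀ i j : Fin n, i < j → α.2 j = false →
    (α.2 i = false → α.1 j < α.1 i) ∧ (α.2 i = true → α.1 i < α.1 j)

def ins {n : ℕ} (x v : Fin (n+1)) (b : Bool) (β : SignedPerm n) : SignedPerm (n+1) :=
  ((finSuccEquiv' x).trans ((β.1.optionCongr).trans (finSuccEquiv' v).symm),
   fun i => ((finSuccEquiv' x) i).elim b β.2)

def del {n : ℕ} (x : Fin (n+1)) (α : SignedPerm (n+1)) : SignedPerm n :=
  (Equiv.removeNone ((finSuccEquiv' x).symm.trans (α.1.trans (finSuccEquiv' (α.1 x)))),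
   fun i => α.2 (x.succAbove i))

@[simp] lemma ins_fst_self {n : ℕ} (x v : Fin (n+1)) (b : Bool) (β : SignedPerm n) :
    (ins x v b β).1 x = v := by
  simp [ins, finSuccEquiv'_at, finSuccEquiv'_symm_none]

@[simp] lemma ins_fst_succAbove {n : ℕ} (x v : Fin (n+1)) (b : Bool) (β : SignedPerm n)
    (i : Fin n) : (ins x v b β).1 (x.succAbove i) = v.succAbove (β.1 i) := by
  simp [ins, finSuccEquiv'_succAbove, finSuccEquiv'_symm_some]

@[simp] lemma ins_snd_self {n : ℕ} (x v : Fin (n+1)) (b : Bool) (β : SignedPerm n) :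
    (ins x v b β).2 x = b := by
  simp [ins, finSuccEquiv'_at]

@[simp] lemma ins_snd_succAbove {n : ℕ} (x v : Fin (n+1)) (b : Bool) (β : SignedPerm n)
    (i : Fin n) : (ins x v b β).2 (x.succAbove i) = β.2 i := by
  simp [ins, finSuccEquiv'_succAbove]

lemma del_fst {n : ℕ} (x : Fin (n+1)) (α : SignedPerm (n+1)) (i : Fin n) :
    (α.1 x).succAbove ((del x α).1 i) = α.1 (x.succAbove i) := by
  have hne : α.1 (x.succAbove i) ≠ α.1 x := α.1.injective.ne (x.succAbove_ne i)
  obtain ⟨j, hj⟩ := Fin.exists_succAbove_eq hne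
  have he : ((finSuccEquiv' x).symm.trans (α.1.trans (finSuccEquiv' (α.1 x)))) (some i)
      = some j := by
    simp [finSuccEquiv'_symm_some, ← hj, finSuccEquiv'_succAbove]
  have h2 := Equiv.removeNone_some _ ⟨j, he⟩
  rw [he] at h2
  have : (del x α).1 i = j := by
    simpa [del] using h2
  rw [this, hj]

@[simp] lemma del_snd {n : ℕ} (x : Fin (n+1)) (α : SignedPerm (n+1)) (i : Fin n) :
    (del x α).2 i = α.2 (x.succAbove i) := rfl

lemma ins_del {n : ℕ} (x : Fin (n+1)) (α : SignedPerm (n+1)) :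
    ins x (α.1 x) (α.2 x) (del x α) = α := by
  refine Prod.ext ?_ ?_
  · ext p
    rcases eq_or_ne p x with rfl | hp
    · simp
    · obtain ⟨i, rfl⟩ := Fin.exists_succAbove_eq hp
      simp [del_fst]
  · funext p
    rcases eq_or_ne p x with rfl | hp
    · simp
    · obtain ⟨i, rfl⟩ := Fin.exists_succAbove_eq hp
      simp

lemma del_ins {n : ℕ} (x v : Fin (n+1)) (b : Bool) (β : SignedPerm n) :
    del x (ins x v b β) = β := by
  refine Prod.ext ?_ ?_
  · ext i
    have h := del_fst x (ins x v b β) i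
    rw [ins_fst_self, ins_fst_succAbove] at h
    exact Fin.ext_iff.mp (Fin.succAbove_right_injective h)
  · funext i
    simp [del]

-- Good transfer lemmas

lemma goodDel {n : ℕ} (x : Fin (n+1)) {α : SignedPerm (n+1)} (h : Good α) :
    Good (del x α) := by
  intro i j hij hj
  have hij' : x.succAbove i < x.succAbove j := Fin.strictMono_succAbove x hij
  rw [del_snd] at hj
  obtain ⟨h1, h2⟩ := h _ _ hij' hj
  constructor <;> intro hs <;> rw [del_snd] at hs
  · have := h1 hs
    rw [← del_fst, ← del_fst] at this
    exact (Fin.strictMono_succAbove _).lt_iff_lt.mp this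
  · have := h2 hs
    rw [← del_fst, ← del_fst] at this
    exact (Fin.strictMono_succAbove _).lt_iff_lt.mp this

lemma goodInsLast {n : ℕ} (v : Fin (n+1)) {β : SignedPerm n} (h : Good β) :
    Good (ins (Fin.last n) v true β) := by
  intro i j hij hj
  have hjl : j ≠ Fin.last n := by
    intro e; rw [e, ins_snd_self] at hj; cases hj
  obtain ⟨j', rfl⟩ := Fin.exists_succAbove_eq hjl
  have hil : i ≠ Fin.last n := ne_of_lt (lt_of_lt_of_le hij (Fin.le_last _))
  obtain ⟨i', rfl⟩ := Fin.exists_succAbove_eq hil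
  have hij' : i' < j' := (Fin.strictMono_succAbove _).lt_iff_lt.mp hij
  rw [ins_snd_succAbove] at hj
  obtain ⟨h1, h2⟩ := h i' j' hij' hj
  constructor <;> intro hs <;> rw [ins_snd_succAbove] at hs <;>
    rw [ins_fst_succAbove, ins_fst_succAbove]
  · exact Fin.strictMono_succAbove v (h1 hs)
  · exact Fin.strictMono_succAbove v (h2 hs)

lemma goodInsMid {n : ℕ} (p : Fin (n+1)) {β : SignedPerm (n+1)} (h : Good β) :
    Good (ins (Fin.castSucc p) 0 true β) := by
  intro i j hij hj
  have hjx : j ≠ Fin.castSucc p := by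
    intro e; rw [e, ins_snd_self] at hj; cases hj
  obtain ⟨j', rfl⟩ := Fin.exists_succAbove_eq hjx
  rcases eq_or_ne i (Fin.castSucc p) with rfl | hix
  · constructor
    · intro hs; rw [ins_snd_self] at hs; cases hs
    · intro _
      rw [ins_fst_self, ins_fst_succAbove, Fin.zero_succAbove]
      exact Fin.succ_pos _
  · obtain ⟨i', rfl⟩ := Fin.exists_succAbove_eq hix
    have hij' : i' < j' := (Fin.strictMono_succAbove _).lt_iff_lt.mp hij
    rw [ins_snd_succAbove] at hj
    obtain ⟨h1, h2⟩ := h i' j' hij' hj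
    constructor <;> intro hs <;> rw [ins_snd_succAbove] at hs <;>
      rw [ins_fst_succAbove, ins_fst_succAbove]
    · exact Fin.strictMono_succAbove _ (h1 hs)
    · exact Fin.strictMono_succAbove _ (h2 hs)

def revAll (m : ℕ) : SignedPerm m := (Fin.revPerm, fun _ => false)

lemma goodRev (m : ℕ) : Good (revAll m) := by
  intro i j hij _
  refine ⟨fun _ => ?_, fun hs => by cases hs⟩
  simpa [revAll] using Fin.rev_lt_rev.mpr hij

lemma good_unbarred_eq_rev {m : ℕ} {α : SignedPerm (m+1)} (hG : Good α)
    (hl : α.2 (Fin.last m) = false) (h0 : α.2 (α.1.symm 0) = false) :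
    α = revAll (m+1) := by
  have hlast0 : α.1 (Fin.last m) = 0 := by
    by_contra hne
    have hne' : α.1.symm 0 ≠ Fin.last m := by
      intro e
      exact hne (by rw [← e, Equiv.apply_symm_apply])
    have hlt : α.1.symm 0 < Fin.last m := (Fin.le_last _).lt_of_ne hne'
    have := (hG _ _ hlt hl).1 h0
    rw [Equiv.apply_symm_apply] at this
    exact Fin.not_lt_zero _ this
  have hsigns : ∀ q, α.2 q = false := by
    intro q
    by_contra hq
    rw [Bool.not_eq_false] at hq
    have hql : q ≠ Fin.last m := by
      intro e; rw [e, hl] at hq; cases hq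
    have hlt : q < Fin.last m := (Fin.le_last _).lt_of_ne hql
    have := (hG _ _ hlt hl).2 hq
    rw [hlast0] at this
    exact Fin.not_lt_zero _ this
  have hdec : ∀ i j : Fin (m+1), i < j → α.1 j < α.1 i := by
    intro i j hij
    exact (hG i j hij (hsigns j)).1 (hsigns i)
  have hsm : StrictMono (fun i => (α.1 i).rev) := by
    intro i j hij
    exact Fin.rev_lt_rev.mpr (hdec i j hij)
  have h2 : ∀ i, (α.1 i).rev = i := by
    have heq := Subsingleton.elim
      (⟨α.1.trans Fin.revPerm, @fun a b => hsm.le_iff_le⟩ : Fin (m+1) ≃o Fin (m+1))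
      (OrderIso.refl _)
    intro i
    exact congrArg (fun e : Fin (m+1) ≃o Fin (m+1) => e i) heq
  refine Prod.ext ?_ (funext hsigns)
  ext i
  have h3 : α.1 i = i.rev := by
    have := congrArg Fin.rev (h2 i); simpa using this
  rw [h3]; rfl

-- new material

lemma succAbove_last_of_ne {n : ℕ} {x : Fin (n+2)} (h : x ≠ Fin.last (n+1)) :
    x.succAbove (Fin.last n) = Fin.last (n+1) := by
  rw [Fin.succAbove_of_le_castSucc, Fin.succ_last]
  have hx : (x : ℕ) < n + 1 := by
    have h1 : (x : ℕ) < n + 2 := x.isLt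
    have h2 : (x : ℕ) ≠ n + 1 := fun e => h (Fin.ext e)
    omega
  rw [Fin.le_def]
  simpa using Nat.lt_succ_iff.mp hx

def equivBarredLast (n : ℕ) :
    {α : SignedPerm (n+1) // Good α ∧ α.2 (Fin.last n) = true} ≃
      Fin (n+1) × {β : SignedPerm n // Good β} where
  toFun α := (α.1.1 (Fin.last n), ⟨del (Fin.last n) α.1, goodDel _ α.2.1⟩)
  invFun vβ := ⟨ins (Fin.last n) vβ.1 true vβ.2.1,
    goodInsLast vβ.1 vβ.2.2, ins_snd_self _ _ _ _⟩
  left_inv := by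
    rintro ⟨α, hG, hl⟩
    apply Subtype.ext
    dsimp only
    conv_lhs => rw [← hl]
    exact ins_del _ α
  right_inv := by
    rintro ⟨v, β, hβ⟩
    refine Prod.ext ?_ (Subtype.ext ?_)
    · exact ins_fst_self _ _ _ _
    · exact del_ins _ _ _ _

def equivUnbarredLast (n : ℕ) :
    {α : SignedPerm (n+2) // Good α ∧ α.2 (Fin.last (n+1)) = false} ≃
      (Fin (n+1) × {α : SignedPerm (n+1) // Good α ∧ α.2 (Fin.last n) = false}) ⊕ Unit where
  toFun α :=
    if h : α.1.2 (α.1.1.symm 0) = true then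
      Sum.inl ((α.1.1.symm 0).castPred
          (by intro e; rw [e, α.2.2] at h; cases h),
        ⟨del (α.1.1.symm 0) α.1, goodDel _ α.2.1, by
          rw [del_snd, succAbove_last_of_ne (by intro e; rw [e, α.2.2] at h; cases h)]
          exact α.2.2⟩)
    else Sum.inr ()
  invFun s :=
    Sum.elim (fun pβ => ⟨ins (Fin.castSucc pβ.1) 0 true pβ.2.1,
      goodInsMid pβ.1 pβ.2.2.1, by
        rw [← succAbove_last_of_ne (Fin.castSucc_lt_last pβ.1).ne, ins_snd_succAbove _ _ _ _ _]
        exact pβ.2.2.2⟩)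
      (fun _ => ⟨revAll (n+2), goodRev _, rfl⟩) s
  left_inv := by
    rintro ⟨α, hG, hl⟩
    dsimp only
    by_cases h : α.2 (α.1.symm 0) = true
    · rw [dif_pos h]
      apply Subtype.ext
      dsimp only [Sum.elim_inl]
      rw [Fin.castSucc_castPred]
      have := ins_del (α.1.symm 0) α
      rw [Equiv.apply_symm_apply, h] at this
      exact this
    · rw [dif_neg h]
      apply Subtype.ext
      dsimp only [Sum.elim_inr]
      rw [Bool.not_eq_true] at h
      exact (good_unbarred_eq_rev hG hl h).symm
  right_inv := by
    rintro (⟨p, β, hβG, hβl⟩ | ⟨⟩)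
    · dsimp only [Sum.elim_inl]
      have hx : (ins (Fin.castSucc p) 0 true β).1.symm 0 = Fin.castSucc p := by
        rw [Equiv.symm_apply_eq, ins_fst_self]
      rw [dif_pos (by rw [hx]; exact ins_snd_self _ _ _ _)]
      congr 1
      refine Prod.ext ?_ (Subtype.ext ?_)
      · simp only [hx]
        exact Fin.castPred_castSucc _
      · simp only [hx]
        exact del_ins _ _ _ _
    · dsimp only [Sum.elim_inr]
      rw [dif_neg]
      rw [show (revAll (n+2)).1.symm 0 = Fin.rev 0 from rfl]
      simp [revAll]

def Cc : ℕ → ℕ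
  | 0 => 1
  | (n+1) => (n+1) * Cc n + 1

def Nn : ℕ → ℕ
  | 0 => 1
  | (n+1) => (n+1) * Nn n + Cc n

def splitEquiv {A : Type*} (P Q : A → Prop) [DecidablePred Q] :
    {a : A // P a} ≃ {a : A // P a ∧ Q a} ⊕ {a : A // P a ∧ ¬ Q a} where
  toFun a := if h : Q a.1 then Sum.inl ⟨a.1, a.2, h⟩ else Sum.inr ⟨a.1, a.2, h⟩
  invFun := Sum.elim (fun a => ⟨a.1, a.2.1⟩) (fun a => ⟨a.1, a.2.1⟩)
  left_inv := by
    rintro ⟨a, h⟩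
    dsimp only
    split_ifs <;> rfl
  right_inv := by
    rintro (⟨a, h1, h2⟩ | ⟨a, h1, h2⟩) <;> simp only [Sum.elim_inl, Sum.elim_inr]
    · exact dif_pos h2
    · exact dif_neg h2

lemma cardE' : ∀ n : ℕ,
    Nat.card {α : SignedPerm (n+1) // Good α ∧ α.2 (Fin.last n) = false} = Cc n
  | 0 => by
    have e : {α : SignedPerm 1 // Good α ∧ α.2 (Fin.last 0) = false} ≃ Unit :=
      { toFun := fun _ => ()
        invFun := fun _ => ⟨(1, fun _ => false), by
          refine ⟨?_, rfl⟩
          intro i j hij _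
          exact absurd hij (by rw [Subsingleton.elim i j]; exact lt_irrefl _)⟩
        left_inv := by
          rintro ⟨⟨π, s⟩, hG, hl⟩
          apply Subtype.ext
          refine Prod.ext (Subsingleton.elim _ _) (funext fun i => ?_)
          have hi : i = Fin.last 0 := Subsingleton.elim _ _
          subst hi
          exact hl.symm
        right_inv := fun _ => rfl }
    rw [Nat.card_congr e]
    simp [Cc]
  | (n+1) => by
    rw [Nat.card_congr (equivUnbarredLast n), Nat.card_sum, Nat.card_prod, cardE' n]
    simp only [Nat.card_eq_fintype_card, Fintype.card_fin, Fintype.card_unit]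
    rfl

lemma cardGood : ∀ n : ℕ, Nat.card {α : SignedPerm n // Good α} = Nn n
  | 0 => by
    have e : {α : SignedPerm 0 // Good α} ≃ Unit :=
      { toFun := fun _ => ()
        invFun := fun _ => ⟨(1, fun i => i.elim0), fun i => i.elim0⟩
        left_inv := by
          rintro ⟨⟨π, s⟩, hG⟩
          apply Subtype.ext
          exact Prod.ext (Subsingleton.elim _ _) (funext fun i => i.elim0)
        right_inv := fun _ => rfl }
    rw [Nat.card_congr e]
    simp [Nn]
  | (n+1) => by
    classical
    rw [Nat.card_congr (splitEquiv Good (fun α : SignedPerm (n+1) => α.2 (Fin.last n) = true)),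
      Nat.card_sum]
    have e2 : {α : SignedPerm (n+1) // Good α ∧ ¬ α.2 (Fin.last n) = true} ≃
        {α : SignedPerm (n+1) // Good α ∧ α.2 (Fin.last n) = false} :=
      Equiv.subtypeEquivRight (fun α => by rw [Bool.not_eq_true])
    rw [Nat.card_congr e2, cardE' n, Nat.card_congr (equivBarredLast n), Nat.card_prod,
      cardGood n]
    simp only [Nat.card_eq_fintype_card, Fintype.card_fin]
    rfl

lemma fin2_lt {a b : Fin 2} (h : a < b) : a = 0 ∧ b = 1 := by
  fin_cases a <;> fin_cases b <;> revert h <;> decide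

lemma strictMono_pair {n : ℕ} {i j : Fin n} (h : i < j) : StrictMono ![i, j] := by
  intro a b hab
  obtain ⟨rfl, rfl⟩ := fin2_lt hab
  simpa using h

lemma avoid_iff {n : ℕ} (α : SignedPerm n) :
    AvoidsAll {p12, p2b1} α ↔ Good α := by
  constructor
  · intro hav i j hij hj
    have h12 := hav p12 (Set.mem_insert _ _)
    have h21 := hav p2b1 (Set.mem_insert_of_mem _ rfl)
    have hne : α.1 i ≠ α.1 j := α.1.injective.ne (ne_of_lt hij)
    constructor
    · intro hi
      rcases hne.lt_or_gt with hlt | hgt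
      · exfalso
        apply h12
        refine ⟨![i, j], strictMono_pair hij, ?_, ?_⟩
        · intro p q
          fin_cases p <;> fin_cases q <;>
            simp [p12, hlt, asymm hlt, lt_irrefl]
        · intro p
          fin_cases p <;> simp [p12, hi, hj]
      · exact hgt
    · intro hi
      rcases hne.lt_or_gt with hlt | hgt
      · exact hlt
      · exfalso
        apply h21
        refine ⟨![i, j], strictMono_pair hij, ?_, ?_⟩
        · intro p q
          fin_cases p <;> fin_cases q <;>
            simp [p2b1, hgt, asymm hgt, lt_irrefl, Equiv.swap_apply_left,
              Equiv.swap_apply_right]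
        · intro p
          fin_cases p <;> simp [p2b1, hi, hj]
  · intro hG τ hτ hc
    obtain ⟨f, hf, hiff, hsgn⟩ := hc
    have hij : f 0 < f 1 := hf (show (0 : Fin 2) < 1 by decide)
    rcases hτ with rfl | rfl
    · have hv : α.1 (f 0) < α.1 (f 1) := (hiff 0 1).mp (by simp [p12])
      have h0 : α.2 (f 0) = false := by simpa [p12] using hsgn 0
      have h1 : α.2 (f 1) = false := by simpa [p12] using hsgn 1
      exact absurd ((hG _ _ hij h1).1 h0) (asymm hv)
    · have hv : α.1 (f 1) < α.1 (f 0) := (hiff 1 0).mp (by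
        simp [p2b1, Equiv.swap_apply_left, Equiv.swap_apply_right])
      have h0 : α.2 (f 0) = true := by simpa [p2b1] using hsgn 0
      have h1 : α.2 (f 1) = false := by simpa [p2b1] using hsgn 1
      exact absurd ((hG _ _ hij h1).2 h0) (asymm hv)


lemma cc_cast (n : ℕ) :
    (Cc n : ℚ) = (Nat.factorial n : ℚ) *
      ∑ j ∈ Finset.range (n+1), 1 / (Nat.factorial j : ℚ) := by
  induction n with
  | zero => simp [Cc]
  | succ n ih =>
    have hfac : ((Nat.factorial (n+1) : ℚ)) ≠ 0 :=
      Nat.cast_ne_zero.mpr (Nat.factorial_ne_zero _)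
    have hfac' : ((Nat.factorial n : ℚ)) ≠ 0 :=
      Nat.cast_ne_zero.mpr (Nat.factorial_ne_zero _)
    rw [show Cc (n+1) = (n+1) * Cc n + 1 from rfl]
    push_cast
    rw [Finset.sum_range_succ, ih, Nat.factorial_succ]
    push_cast
    field_simp

lemma nn_cast (n : ℕ) :
    (Nn n : ℚ) = (Nat.factorial n : ℚ) +
      (Nat.factorial n : ℚ) *
        ∑ i ∈ Finset.Icc 1 n,
          (1 / (i : ℚ)) * ∑ j ∈ Finset.range i, 1 / (Nat.factorial j : ℚ) := by
  induction n with
  | zero => simp [Nn]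
  | succ n ih =>
    rw [show Nn (n+1) = (n+1) * Nn n + Cc n from rfl]
    push_cast
    rw [ih, cc_cast, Finset.sum_Icc_succ_top (Nat.succ_le_succ (Nat.zero_le n)),
      Nat.factorial_succ]
    push_cast
    have hn1 : ((n : ℚ) + 1) ≠ 0 := by positivity
    field_simp
    ring

lemma bn_eq_Nn (n : ℕ) : bn n {p12, p2b1} = Nn n := by
  have h0 : bn n {p12, p2b1} = Nat.card {α : SignedPerm n // AvoidsAll {p12, p2b1} α} := rfl
  rw [h0, Nat.card_congr (Equiv.subtypeEquivRight (fun α => avoid_iff α)), cardGood]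

end AuxProof

/-- b_n({12,2̄1}) = n! + n!·Σ_{i=1}^n (1/i)·Σ_{j=0}^{i-1} 1/j!. -/
theorem stmt2 (n : ℕ) :
    (bn n {p12, p2b1} : ℚ) =
      (Nat.factorial n : ℚ) +
        (Nat.factorial n : ℚ) *
          ∑ i ∈ Finset.Icc 1 n,
            (1 / (i : ℚ)) * ∑ j ∈ Finset.range i, 1 / (Nat.factorial j : ℚ) := by
  rw [bn_eq_Nn, nn_cast]
end

section
/- For every natural number n ≥ 0, with T_2 = {12, 12̄, 1̄2̄}, one has b_n(T_2) = C_{n+1}, the (n+1)-st Catalan number. -/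
/-! ### Auxiliary development -/

/-- Validity: every ascent pair must be (barred, unbarred). -/
def SValid {n : ℕ} (α : SignedPerm n) : Prop :=
  ∀ i j : Fin n, i < j → α.1 i < α.1 j → α.2 i = true ∧ α.2 j = false

instance {n : ℕ} : DecidablePred (SValid (n := n)) := fun α => by
  unfold SValid; infer_instance

/-- Validity plus: every unbarred value is at least `v`. -/
def SQP (n v : ℕ) (α : SignedPerm n) : Prop :=
  SValid α ∧ ∀ i, α.2 i = false → v ≤ (α.1 i : ℕ)

instance {n v : ℕ} : DecidablePred (SQP n v) := fun α => by
  unfold SQP; infer_instance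

noncomputable def qcard (n v : ℕ) : ℕ := Nat.card {α : SignedPerm n // SQP n v α}

lemma qcard_eq (n v : ℕ) : qcard n v = Fintype.card {α : SignedPerm n // SQP n v α} :=
  Nat.card_eq_fintype_card

lemma spContains_iff {n : ℕ} (α : SignedPerm n) (b0 b1 : Bool) :
    SPContains α (Equiv.refl (Fin 2), ![b0, b1]) ↔
      ∃ i j : Fin n, i < j ∧ α.1 i < α.1 j ∧ α.2 i = b0 ∧ α.2 j = b1 := by
  constructor
  · rintro ⟨f, hf, hord, hsign⟩
    have h01 : (0 : Fin 2) < 1 := by decide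
    exact ⟨f 0, f 1, hf h01, (hord 0 1).mp h01,
      by simpa using hsign 0, by simpa using hsign 1⟩
  · rintro ⟨i, j, hij, hlt, h0, h1⟩
    have h2 : ∀ r : Fin 2, r = 0 ∨ r = 1 := by decide
    refine ⟨![i, j], ?_, ?_, ?_⟩
    · intro p q hpq
      rcases h2 p with rfl | rfl <;> rcases h2 q with rfl | rfl
      · exact absurd hpq (by decide)
      · simpa using hij
      · exact absurd hpq (by decide)
      · exact absurd hpq (by decide)
    · intro p q
      rcases h2 p with rfl | rfl <;> rcases h2 q with rfl | rfl
      · exact iff_of_false (show ¬((0 : Fin 2) < (0 : Fin 2)) by decide) (by simp)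
      · exact iff_of_true (show (0 : Fin 2) < (1 : Fin 2) by decide) (by simpa using hlt)
      · exact iff_of_false (show ¬((1 : Fin 2) < (0 : Fin 2)) by decide)
          (by simpa using lt_asymm hlt)
      · exact iff_of_false (show ¬((1 : Fin 2) < (1 : Fin 2)) by decide) (by simp)
    · intro j'
      rcases h2 j' with rfl | rfl
      · simpa using h0
      · simpa using h1

lemma avoids_iff_valid {n : ℕ} (α : SignedPerm n) :
    AvoidsAll {p12, p12b, p1b2b} α ↔ SValid α := by
  unfold AvoidsAll
  simp only [Set.mem_insert_iff, Set.mem_singleton_iff, forall_eq_or_imp, forall_eq]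
  rw [p12, p12b, p1b2b, spContains_iff, spContains_iff, spContains_iff]
  constructor
  · rintro ⟨h1, h2, h3⟩ i j hij hlt
    cases hbi : α.2 i <;> cases hbj : α.2 j
    · exact absurd ⟨i, j, hij, hlt, hbi, hbj⟩ h1
    · exact absurd ⟨i, j, hij, hlt, hbi, hbj⟩ h2
    · exact ⟨rfl, rfl⟩
    · exact absurd ⟨i, j, hij, hlt, hbi, hbj⟩ h3
  · intro hv
    refine ⟨?_, ?_, ?_⟩ <;> rintro ⟨i, j, hij, hlt, h0, h1⟩ <;>
      obtain ⟨ha, hb⟩ := hv i j hij hlt <;> simp_all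

/-! ### The last-entry decomposition -/

def extPerm {n : ℕ} (w : Fin (n + 1)) (τ : Equiv.Perm (Fin n)) : Equiv.Perm (Fin (n + 1)) :=
  (finSuccEquivLast.trans τ.optionCongr).trans (finSuccEquiv' w).symm

@[simp] lemma extPerm_castSucc {n : ℕ} (w : Fin (n + 1)) (τ : Equiv.Perm (Fin n)) (i : Fin n) :
    extPerm w τ (Fin.castSucc i) = w.succAbove (τ i) := by
  simp [extPerm]

@[simp] lemma extPerm_last {n : ℕ} (w : Fin (n + 1)) (τ : Equiv.Perm (Fin n)) :
    extPerm w τ (Fin.last n) = w := by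
  simp [extPerm, finSuccEquivLast_last]

def delPerm {n : ℕ} (σ : Equiv.Perm (Fin (n + 1))) : Equiv.Perm (Fin n) :=
  Equiv.removeNone ((finSuccEquivLast.symm.trans σ).trans (finSuccEquiv' (σ (Fin.last n))))

lemma delPerm_extPerm {n : ℕ} (w : Fin (n + 1)) (τ : Equiv.Perm (Fin n)) :
    delPerm (extPerm w τ) = τ := by
  have h : ((finSuccEquivLast.symm.trans (extPerm w τ)).trans
      (finSuccEquiv' (extPerm w τ (Fin.last n)))) = τ.optionCongr := by
    ext x
    cases x with
    | none => simp [finSuccEquiv'_at]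
    | some i => simp [finSuccEquiv'_succAbove]
  rw [delPerm, h, Equiv.removeNone_optionCongr]

lemma extPerm_delPerm {n : ℕ} (σ : Equiv.Perm (Fin (n + 1))) :
    extPerm (σ (Fin.last n)) (delPerm σ) = σ := by
  ext i
  refine Fin.lastCases ?_ ?_ i
  · simp
  · intro i
    rw [extPerm_castSucc]
    have hne : σ (Fin.castSucc i) ≠ σ (Fin.last n) :=
      fun h => absurd (σ.injective h) (Fin.ne_last_of_lt (Fin.castSucc_lt_last i))
    obtain ⟨j, hj⟩ := Fin.exists_succAbove_eq hne
    have : delPerm σ i = j := by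
      have := Equiv.removeNone_some
        (e := (finSuccEquivLast.symm.trans σ).trans (finSuccEquiv' (σ (Fin.last n))))
        (x := i) ⟨j, by simp [← hj, finSuccEquiv'_succAbove]⟩
      rw [delPerm]
      have h2 : ((finSuccEquivLast.symm.trans σ).trans
          (finSuccEquiv' (σ (Fin.last n)))) (some i) = some j := by
        simp [← hj, finSuccEquiv'_succAbove]
      exact Option.some_injective _ (by rw [this, h2])
    rw [this, hj]

def extSP {n : ℕ} (w : Fin (n + 1)) (b : Bool) (β : SignedPerm n) : SignedPerm (n + 1) :=
  (extPerm w β.1, Fin.snoc β.2 b)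

def lastEquiv (n : ℕ) : SignedPerm (n + 1) ≃ (Fin (n + 1) × Bool) × SignedPerm n where
  toFun α := ((α.1 (Fin.last n), α.2 (Fin.last n)), (delPerm α.1, Fin.init α.2))
  invFun x := extSP x.1.1 x.1.2 x.2
  left_inv α := by
    obtain ⟨σ, s⟩ := α
    simp only [extSP, extPerm_delPerm]
    exact Prod.ext rfl (Fin.snoc_init_self s)
  right_inv x := by
    obtain ⟨⟨w, b⟩, ⟨τ, s⟩⟩ := x
    simp [extSP, delPerm_extPerm, Fin.init_snoc]

lemma coe_succAbove {n : ℕ} (w : Fin (n + 1)) (j : Fin n) :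
    (w.succAbove j : ℕ) = if (j : ℕ) < (w : ℕ) then (j : ℕ) else (j : ℕ) + 1 := by
  rw [Fin.succAbove]
  rcases lt_or_ge (Fin.castSucc j) w with h | h
  · rw [if_pos h, if_pos (by simpa [Fin.lt_def] using h)]
    simp
  · rw [if_neg (not_lt.mpr h), if_neg (by simpa [Fin.le_def] using h)]
    simp

lemma succAbove_lt_left_iff {n : ℕ} (w : Fin (n + 1)) (j : Fin n) :
    w.succAbove j < w ↔ (j : ℕ) < (w : ℕ) := by
  rw [Fin.lt_def, coe_succAbove]
  split <;> omega

lemma valid_extSP_iff {n : ℕ} (w : Fin (n + 1)) (b : Bool) (β : SignedPerm n) :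
    SValid (extSP w b β) ↔
      SValid β ∧ ∀ i : Fin n, (β.1 i : ℕ) < (w : ℕ) → β.2 i = true ∧ b = false := by
  constructor
  · intro h
    constructor
    · intro i j hij hlt
      have := h i.castSucc j.castSucc (by simpa using hij)
        (by simpa [extSP, Fin.succAbove_lt_succAbove_iff] using hlt)
      simpa [extSP] using this
    · intro i hlt
      have := h i.castSucc (Fin.last n) (Fin.castSucc_lt_last i)
        (by simpa [extSP, succAbove_lt_left_iff] using hlt)
      simpa [extSP] using this
  · rintro ⟨hv, hw⟩ i j hij hlt
    rcases Fin.eq_castSucc_or_eq_last j with ⟨j', rfl⟩ | rfl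
    · rcases Fin.eq_castSucc_or_eq_last i with ⟨i', rfl⟩ | rfl
      · have hij' : i' < j' := by simpa using hij
        have hlt' : β.1 i' < β.1 j' := by
          simpa [extSP, Fin.succAbove_lt_succAbove_iff] using hlt
        obtain ⟨ha, hb⟩ := hv i' j' hij' hlt'
        simp [extSP, ha, hb]
      · exact absurd hij (not_lt.mpr (Fin.castSucc_lt_last j').le)
    · rcases Fin.eq_castSucc_or_eq_last i with ⟨i', rfl⟩ | rfl
      · have hlt' : (β.1 i' : ℕ) < (w : ℕ) := by
          simpa [extSP, succAbove_lt_left_iff] using hlt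
        obtain ⟨ha, hb⟩ := hw i' hlt'
        simp [extSP, ha, hb]
      · exact absurd hij (lt_irrefl _)

lemma sqp_ext_true_zero {n v : ℕ} (β : SignedPerm n) :
    SQP (n + 1) v (extSP 0 true β) ↔ SQP n (v - 1) β := by
  unfold SQP
  rw [valid_extSP_iff]
  have hval : ∀ i : Fin n, ((0 : Fin (n+1)).succAbove (β.1 i) : ℕ) = (β.1 i : ℕ) + 1 := by
    intro i; rw [coe_succAbove]; simp
  constructor
  · rintro ⟨⟨h1, _⟩, h2⟩
    refine ⟨h1, fun i hi => ?_⟩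
    have := h2 i.castSucc (by simpa [extSP] using hi)
    rw [show ((extSP 0 true β).1 i.castSucc : ℕ) = (β.1 i : ℕ) + 1 by
      simp [extSP, hval]] at this
    omega
  · rintro ⟨h1, h2⟩
    refine ⟨⟨h1, fun i hi => by simp at hi⟩, ?_⟩
    intro i
    refine Fin.lastCases ?_ ?_ i
    · simp [extSP]
    · intro i hi
      have hi' : β.2 i = false := by simpa [extSP] using hi
      have := h2 i hi'
      rw [show ((extSP 0 true β).1 i.castSucc : ℕ) = (β.1 i : ℕ) + 1 by
        simp [extSP, hval]]
      omega

lemma sqp_ext_true_ne {n v : ℕ} {w : Fin (n + 1)} (hw : w ≠ 0) (β : SignedPerm n) :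
    ¬ SQP (n + 1) v (extSP w true β) := by
  rintro ⟨hv, -⟩
  rw [valid_extSP_iff] at hv
  cases n with
  | zero => exact hw (Fin.eq_zero w)
  | succ m =>
    have h0 : (β.1 (β.1.symm 0) : ℕ) < (w : ℕ) := by
      simp only [Equiv.apply_symm_apply]
      exact lt_of_le_of_ne (Nat.zero_le _) (fun h => hw (Fin.ext (by
        simp only [Fin.val_zero] at h ⊢; omega)))
    exact absurd (hv.2 _ h0).2 (by simp)

lemma sqp_ext_false {n v : ℕ} (w : Fin (n + 1)) (β : SignedPerm n) :
    SQP (n + 1) v (extSP w false β) ↔ SQP n (w : ℕ) β ∧ v ≤ (w : ℕ) := by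
  unfold SQP
  rw [valid_extSP_iff]
  constructor
  · rintro ⟨⟨h1, h2⟩, h3⟩
    have hvw : v ≤ (w : ℕ) := by
      have := h3 (Fin.last n) (by simp [extSP])
      simpa [extSP] using this
    refine ⟨⟨h1, fun i hi => ?_⟩, hvw⟩
    by_contra hcon
    exact absurd (h2 i (by omega)).1 (by simp [hi])
  · rintro ⟨⟨h1, h2⟩, hvw⟩
    refine ⟨⟨h1, fun i hi => ⟨?_, rfl⟩⟩, ?_⟩
    · by_contra hcon
      have := h2 i (by simpa using hcon)
      omega
    · intro i
      refine Fin.lastCases ?_ ?_ i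
      · intro _; simpa [extSP] using hvw
      · intro i hi
        have hi' : β.2 i = false := by simpa [extSP] using hi
        have hle := h2 i hi'
        have : ((extSP w false β).1 i.castSucc : ℕ) = (w.succAbove (β.1 i) : ℕ) := by
          simp [extSP]
        rw [this, coe_succAbove]
        split <;> omega

/-! ### The cardinality recurrence -/

lemma qcard_zero (v : ℕ) : qcard 0 v = 1 := by
  rw [qcard_eq]
  rw [Fintype.card_eq_one_iff]
  refine ⟨⟨(Equiv.refl _, Fin.elim0), ⟨fun i => i.elim0, fun i => i.elim0⟩⟩, ?_⟩
  rintro ⟨⟨σ, s⟩, -⟩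
  refine Subtype.ext (Prod.ext ?_ ?_)
  · exact Equiv.ext fun i => i.elim0
  · exact funext fun i => i.elim0

lemma qcard_succ (n v : ℕ) :
    qcard (n + 1) v = qcard n (v - 1) + ∑ w ∈ Finset.Icc v n, qcard n w := by
  have e1 : {α : SignedPerm (n+1) // SQP (n+1) v α} ≃
      Σ x : Fin (n+1) × Bool, {β : SignedPerm n // SQP (n+1) v (extSP x.1 x.2 β)} := by
    refine ((lastEquiv n).subtypeEquiv ?_).trans
      (Equiv.subtypeProdEquivSigmaSubtype
        (fun (a : Fin (n+1) × Bool) (b : SignedPerm n) => SQP (n+1) v (extSP a.1 a.2 b)))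
    intro α
    have h : extSP ((lastEquiv n) α).1.1 ((lastEquiv n) α).1.2 ((lastEquiv n) α).2 = α :=
      (lastEquiv n).symm_apply_apply α
    rw [h]
  rw [qcard, Nat.card_congr e1, Nat.card_eq_fintype_card, Fintype.card_sigma,
    Fintype.sum_prod_type]
  have hsplit : ∀ w : Fin (n+1),
      (∑ b : Bool, Fintype.card {β : SignedPerm n // SQP (n+1) v (extSP w b β)}) =
        (if w = 0 then Fintype.card {β : SignedPerm n // SQP n (v-1) β} else 0) +
        (if v ≤ (w : ℕ) then Fintype.card {β : SignedPerm n // SQP n (w : ℕ) β} else 0) := by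
    intro w
    rw [Fintype.sum_bool]
    congr 1
    · by_cases hw : w = 0
      · subst hw
        rw [if_pos rfl]
        exact Fintype.card_congr (Equiv.subtypeEquivRight fun β => sqp_ext_true_zero β)
      · rw [if_neg hw]
        exact Fintype.card_eq_zero_iff.mpr ⟨fun b => sqp_ext_true_ne hw _ b.2⟩
    · by_cases hw : v ≤ (w : ℕ)
      · rw [if_pos hw]
        refine Fintype.card_congr (Equiv.subtypeEquivRight fun β => ?_)
        rw [sqp_ext_false]
        exact ⟨fun h => h.1, fun h => ⟨h, hw⟩⟩
      · rw [if_neg hw]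
        refine Fintype.card_eq_zero_iff.mpr ⟨fun b => ?_⟩
        have := (sqp_ext_false w b.1).mp b.2
        exact hw this.2
  rw [Finset.sum_congr rfl (fun w _ => hsplit w), Finset.sum_add_distrib]
  congr 1
  · rw [Finset.sum_ite_eq' Finset.univ (0 : Fin (n+1))
      (fun _ => Fintype.card {β : SignedPerm n // SQP n (v-1) β})]
    simp [qcard_eq]
  · rw [Fin.sum_univ_eq_sum_range
      (fun k => if v ≤ k then Fintype.card {β : SignedPerm n // SQP n k β} else 0) (n+1)]
    rw [← Finset.sum_filter]
    have : Finset.filter (fun i => v ≤ i) (Finset.range (n+1)) = Finset.Icc v n := by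
      ext x; simp [Finset.mem_Icc, Finset.mem_range, Finset.mem_filter]; omega
    rw [this]
    exact Finset.sum_congr rfl fun w _ => (qcard_eq n w).symm

/-! ### The abstract recurrence and ballot numbers -/

def qfun : ℕ → ℕ → ℕ
  | 0, _ => 1
  | n + 1, v => qfun n (v - 1) + ∑ w ∈ Finset.Icc v n, qfun n w

lemma qcard_eq_qfun (n v : ℕ) : qcard n v = qfun n v := by
  induction n generalizing v with
  | zero => rw [qcard_zero]; rfl
  | succ n ih =>
    rw [qcard_succ, qfun]
    rw [ih (v - 1)]
    exact congrArg _ (Finset.sum_congr rfl fun w _ => ih w)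

lemma qfun_of_le {n v : ℕ} (h : n ≤ v) : qfun n v = 1 := by
  induction n generalizing v with
  | zero => rfl
  | succ n ih =>
    rw [qfun, Finset.Icc_eq_empty (by omega), Finset.sum_empty, ih (by omega)]
    omega

lemma qfun_pascal {n v : ℕ} (h : v ≤ n) :
    qfun (n + 1) v = qfun (n + 1) (v + 1) + qfun n (v - 1) := by
  have hins : Finset.Icc v n = insert v (Finset.Icc (v+1) n) := by
    ext x; simp only [Finset.mem_Icc, Finset.mem_insert]; omega
  rw [qfun, qfun, hins, Finset.sum_insert (by simp [Finset.mem_Icc])]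
  have : (v + 1) - 1 = v := by omega
  rw [this]
  omega

lemma qfun_choose (n : ℕ) : ∀ j, j < n →
    qfun n (n - (j + 1)) + (n + 2 + j).choose j = (n + 2 + j).choose (j + 1) := by
  induction n with
  | zero => intro j hj; omega
  | succ n ihn =>
    intro j
    induction j using Nat.strong_induction_on with
    | _ j ihj =>
      intro hj
      rcases j with _ | j
      · -- j = 0
        rw [show n + 1 - (0 + 1) = n from by omega,
            show n + 1 + 2 + 0 = n + 3 from by omega,
            show (0 : ℕ) + 1 = 1 from rfl]
        simp only [Nat.choose_zero_right, Nat.choose_one_right]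
        have h1 : qfun (n + 1) n = qfun (n + 1) (n + 1) + qfun n (n - 1) := by
          have := qfun_pascal (n := n) (v := n) le_rfl
          rwa [show n - 1 = n - 1 from rfl] at this
        have hq2 : qfun (n + 1) (n + 1) = 1 := qfun_of_le le_rfl
        have h3 : qfun n (n - 1) = n + 1 := by
          cases n with
          | zero => rfl
          | succ m =>
            have h := ihn 0 (by omega)
            rw [show m + 1 - (0 + 1) = m + 1 - 1 from by omega,
                show m + 1 + 2 + 0 = m + 3 from by omega,
                show (0 : ℕ) + 1 = 1 from rfl] at h
            simp only [Nat.choose_zero_right, Nat.choose_one_right] at h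
            omega
        omega
      · -- j + 1
        have hjn : j + 1 ≤ n := by omega
        have hpas : qfun (n + 1) (n - (j + 1)) =
            qfun (n + 1) (n - (j + 1) + 1) + qfun n (n - (j + 1) - 1) :=
          qfun_pascal (by omega)
        have hprev := ihj j (by omega) (by omega)
        rw [show n + 1 + 2 + j = n + j + 3 from by omega] at hprev
        rcases Nat.lt_or_ge (j + 1) n with h2 | h2
        · -- generic case
          have hout := ihn (j + 1) h2
          rw [show n + 2 + (j + 1) = n + j + 3 from by omega,
              show j + 1 + 1 = j + 2 from by omega,
              show n - (j + 1 + 1) = n - (j + 2) from by omega] at hout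
          have p1 := Nat.choose_succ_succ' (n + j + 3) j
          have p2 := Nat.choose_succ_succ' (n + j + 3) (j + 1)
          rw [show j + 1 + 1 = j + 2 from by omega] at p2
          rw [show n + 1 - (j + 1 + 1) = n - (j + 1) from by omega, hpas,
              show n - (j + 1) + 1 = n + 1 - (j + 1) from by omega,
              show n - (j + 1) - 1 = n - (j + 2) from by omega,
              show n + 1 + 2 + (j + 1) = n + j + 3 + 1 from by omega,
              show j + 1 + 1 = j + 2 from by omega]
          omega
        · -- boundary case : j + 1 = n
          have hn : n = j + 1 := by omega
          subst hn
          have hq0 : qfun (j + 1) 0 + (2 * j + 3).choose j = (2 * j + 3).choose (j + 1) := by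
            have h := ihn j (by omega)
            rwa [show j + 1 + 2 + j = 2 * j + 3 from by omega,
                show j + 1 - (j + 1) = 0 from by omega] at h
          have hq1 : qfun (j + 2) 1 + (2 * j + 4).choose j = (2 * j + 4).choose (j + 1) := by
            rwa [show j + 1 + j + 3 = 2 * j + 4 from by omega,
                show j + 1 + 1 - (j + 1) = 1 from by omega,
                show j + 1 + 1 = j + 2 from by omega] at hprev
          have p1 := Nat.choose_succ_succ' (2 * j + 4) j
          rw [show 2 * j + 4 + 1 = 2 * j + 5 from by omega] at p1
          have p2 := Nat.choose_succ_succ' (2 * j + 4) (j + 1)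
          rw [show 2 * j + 4 + 1 = 2 * j + 5 from by omega,
              show j + 1 + 1 = j + 2 from by omega] at p2
          have p3 := Nat.choose_succ_succ' (2 * j + 3) (j + 1)
          rw [show 2 * j + 3 + 1 = 2 * j + 4 from by omega,
              show j + 1 + 1 = j + 2 from by omega] at p3
          have p4 := Nat.choose_succ_succ' (2 * j + 3) j
          rw [show 2 * j + 3 + 1 = 2 * j + 4 from by omega] at p4
          have psym : (2 * j + 3).choose (j + 2) = (2 * j + 3).choose (j + 1) := by
            have h := Nat.choose_symm (n := 2 * j + 3) (k := j + 2) (by omega)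
            rw [show 2 * j + 3 - (j + 2) = j + 1 from by omega] at h
            exact h.symm
          have hpas0 : qfun (j + 2) 0 = qfun (j + 2) 1 + qfun (j + 1) 0 := by
            have h := qfun_pascal (n := j + 1) (v := 0) (by omega)
            rwa [show j + 1 + 1 = j + 2 from by omega,
                show 0 - 1 = 0 from by omega, show 0 + 1 = 1 from by omega] at h
          rw [show j + 1 + 1 - (j + 1 + 1) = 0 from by omega,
              show j + 1 + 1 + 2 + (j + 1) = 2 * j + 5 from by omega,
              show j + 1 + 1 = j + 2 from by omega]
          omega

lemma qfun_zero_eq_catalan (n : ℕ) : qfun n 0 = catalan (n + 1) := by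
  cases n with
  | zero => simp [qfun, catalan_one]
  | succ m =>
    have A := qfun_choose (m + 1) m (by omega)
    rw [show m + 1 + 2 + m = 2 * m + 3 from by omega,
        show m + 1 - (m + 1) = 0 from by omega] at A
    have h2 := Nat.choose_succ_right_eq (2 * m + 3) m
    rw [show 2 * m + 3 - m = m + 3 from by omega] at h2
    have hc : (m + 3) * catalan (m + 2) = (2 * m + 4).choose (m + 2) := by
      have h := succ_mul_catalan_eq_centralBinom (m + 2)
      rw [Nat.centralBinom_eq_two_mul_choose,
          show 2 * (m + 2) = 2 * m + 4 from by omega,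
          show m + 2 + 1 = m + 3 from by omega] at h
      exact h
    have p1 := Nat.choose_succ_succ' (2 * m + 3) (m + 1)
    rw [show 2 * m + 3 + 1 = 2 * m + 4 from by omega,
        show m + 1 + 1 = m + 2 from by omega] at p1
    have psym : (2 * m + 3).choose (m + 2) = (2 * m + 3).choose (m + 1) := by
      have h := Nat.choose_symm (n := 2 * m + 3) (k := m + 2) (by omega)
      rw [show 2 * m + 3 - (m + 2) = m + 1 from by omega] at h
      exact h.symm
    have hA : (m + 3) * qfun (m + 1) 0 + (m + 3) * (2 * m + 3).choose m
        = (m + 3) * (2 * m + 3).choose (m + 1) := by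
      rw [← Nat.mul_add, A]
    have h2' : (m + 3) * (2 * m + 3).choose m = (m + 1) * (2 * m + 3).choose (m + 1) := by
      calc (m + 3) * (2 * m + 3).choose m = (2 * m + 3).choose m * (m + 3) := Nat.mul_comm _ _
        _ = (2 * m + 3).choose (m + 1) * (m + 1) := h2.symm
        _ = (m + 1) * (2 * m + 3).choose (m + 1) := Nat.mul_comm _ _
    have hr : (m + 3) * (2 * m + 3).choose (m + 1)
        = (m + 1) * (2 * m + 3).choose (m + 1) + 2 * (2 * m + 3).choose (m + 1) := by ring
    have hcat : (m + 3) * catalan (m + 2) = 2 * (2 * m + 3).choose (m + 1) := by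
      rw [hc, p1, psym]; ring
    have key : (m + 3) * qfun (m + 1) 0 = (m + 3) * catalan (m + 2) := by
      rw [hcat]; linarith
    exact Nat.eq_of_mul_eq_mul_left (by omega) key

/-- b_n(T₂) with T₂ = {12,12̄,1̄2̄} equals the (n+1)-st Catalan number. -/
theorem stmt5 (n : ℕ) :
    bn n {p12, p12b, p1b2b} = catalan (n + 1) := by
  have h1 : bn n {p12, p12b, p1b2b} = qcard n 0 := by
    rw [bn, qcard]
    refine Nat.card_congr (Equiv.subtypeEquivRight fun α => ?_)
    rw [avoids_iff_valid]
    exact ⟨fun h => ⟨h, fun i _ => Nat.zero_le _⟩, fun h => h.1⟩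
  rw [h1, qcard_eq_qfun, qfun_zero_eq_catalan]
end
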